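/- Let 𝓕 be the set of F ∈ C²[0,∞) with F(0)=1/2 satisfying the strong and dominant energy conditions (F' ≤ 0, F'' ≥ 0, x²F''+2xF'-2F+1 ≥ 0, 2xF'-2F+1 ≥ 0, -x²F''+2xF'-2F+1 ≥ 0 for all x ≥ 0), equipped with the norm ‖F‖ = sup_{[0,2)}|F| + sup_{[2,∞)}|F/x|. Define 𝓕_{NS1} = {F ∈ 𝓕 : ∃ x₀ > 0 and x₁ > x₀ with F(x₀) = 1/x₀ and F(x₁) > 1/x₁}. Then 𝓕_{NS1} is open in 𝓕. -/

import Mathlib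

def MemF (F : ℝ → ℝ) : Prop :=
  ContDiff ℝ 2 F ∧ F 0 = 1/2 ∧
  (∀ x ≥ (0:ℝ), deriv F x ≤ 0) ∧
  (∀ x ≥ (0:ℝ), deriv (deriv F) x ≥ 0) ∧
  (∀ x ≥ (0:ℝ), x^2 * deriv (deriv F) x + 2*x*deriv F x - 2*F x + 1 ≥ 0) ∧
  (∀ x ≥ (0:ℝ), 2*x*deriv F x - 2*F x + 1 ≥ 0) ∧
  (∀ x ≥ (0:ℝ), -(x^2 * deriv (deriv F) x) + 2*x*deriv F x - 2*F x + 1 ≥ 0)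

noncomputable def Fnorm (F : ℝ → ℝ) : ℝ :=
  sSup ((fun x => |F x|) '' Set.Ico (0:ℝ) 2) +
  sSup ((fun x => |F x / x|) '' Set.Ici (2:ℝ))

def NS1 (F : ℝ → ℝ) : Prop :=
  ∃ x₀ > (0:ℝ), ∃ x₁ > x₀, F x₀ = 1/x₀ ∧ F x₁ > 1/x₁

def CEN (F : ℝ → ℝ) : Prop := ∀ x > (0:ℝ), F x < 1/x

def CEN1 (F : ℝ → ℝ) : Prop :=
  CEN F ∧ ∃ xH > (0:ℝ), F xH = 0 ∧ ∀ x > xH, F x < 0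

open Set

lemma memF_upper {F : ℝ → ℝ} (hF : MemF F) : ∀ x ≥ (0:ℝ), F x ≤ 1/2 := by
  have hanti : AntitoneOn F (Ici 0) := by
    apply antitoneOn_of_deriv_nonpos (convex_Ici 0) hF.1.continuous.continuousOn
    · intro x _
      exact ((hF.1.differentiable (by norm_num)) x).differentiableWithinAt
    · intro x hx
      rw [interior_Ici] at hx
      exact hF.2.2.1 x (le_of_lt hx)
  intro x hx
  have := hanti self_mem_Ici hx hx
  rw [hF.2.1] at this
  exact this

lemma memF_deriv_cd {F : ℝ → ℝ} (hF : MemF F) : ContDiff ℝ 1 (deriv F) := by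
  have h2 : ContDiff ℝ ((1:ℕ∞)+1) F := by exact_mod_cast hF.1
  exact (contDiff_succ_iff_deriv.mp h2).2.2

lemma memF_lower {F : ℝ → ℝ} (hF : MemF F) :
    ∀ x ≥ (0:ℝ), F 0 + deriv F 0 * x ≤ F x := by
  have hmono : MonotoneOn (deriv F) (Ici 0) := by
    apply monotoneOn_of_deriv_nonneg (convex_Ici 0)
      (memF_deriv_cd hF).continuous.continuousOn
    · intro x _
      exact (((memF_deriv_cd hF).differentiable one_ne_zero) x).differentiableWithinAt
    · intro x hx
      rw [interior_Ici] at hx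
      exact hF.2.2.2.1 x (le_of_lt hx)
  intro x hx
  rcases eq_or_lt_of_le hx with h | h
  · simp [← h]
  · obtain ⟨c, hc, hder⟩ := exists_deriv_eq_slope F h hF.1.continuous.continuousOn
      ((hF.1.differentiable (by norm_num)).differentiableOn)
    have h1 : deriv F 0 ≤ deriv F c := hmono self_mem_Ici (le_of_lt hc.1) (le_of_lt hc.1)
    rw [hder] at h1
    have : deriv F 0 * x ≤ F x - F 0 := by
      rw [sub_zero] at h1
      calc deriv F 0 * x ≤ ((F x - F 0) / x) * x := by
            apply mul_le_mul_of_nonneg_right h1 (le_of_lt h)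
        _ = F x - F 0 := by field_simp
    linarith

lemma memF_div_bound {F : ℝ → ℝ} (hF : MemF F) :
    ∀ x ≥ (2:ℝ), |F x / x| ≤ 1/4 + |deriv F 0| := by
  intro x hx
  have hx0 : (0:ℝ) < x := by linarith
  have hup : F x ≤ 1/2 := memF_upper hF x (by linarith)
  have hlo : F 0 + deriv F 0 * x ≤ F x := memF_lower hF x (by linarith)
  rw [hF.2.1] at hlo
  rw [abs_le]
  constructor
  · have h1 : deriv F 0 ≤ F x / x := by
      rw [le_div_iff₀ hx0]
      nlinarith
    have h2 : -|deriv F 0| ≤ deriv F 0 := neg_abs_le _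
    linarith
  · have h1 : F x / x ≤ (1/2) / x := by
      apply div_le_div_of_nonneg_right hup hx0.le
    have h2 : (1/2 : ℝ) / x ≤ 1/4 := by
      rw [div_le_iff₀ hx0]; linarith
    have := abs_nonneg (deriv F 0)
    linarith

theorem stmt_8 (F : ℝ → ℝ) (hF : MemF F) (hNS : NS1 F) :
    ∃ ε > (0:ℝ), ∀ G : ℝ → ℝ, MemF G →
      Fnorm (fun x => F x - G x) < ε → NS1 G := by
  obtain ⟨x₀, hx₀, x₁, hx₁, _, hFx₁⟩ := hNS
  have hx₁pos : (0:ℝ) < x₁ := lt_trans hx₀ hx₁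
  have hx₁2 : (2:ℝ) < x₁ := by
    have h1 : 1/x₁ < 1/2 := lt_of_lt_of_le hFx₁ (memF_upper hF x₁ (le_of_lt hx₁pos))
    by_contra h
    push_neg at h
    have : (1:ℝ)/2 ≤ 1/x₁ := by
      apply div_le_div_of_nonneg_left (by norm_num) hx₁pos h
    linarith
  refine ⟨(F x₁ - 1/x₁)/x₁, div_pos (by linarith) hx₁pos, ?_⟩
  intro G hG hnorm
  -- the key pointwise estimate at x₁
  have hbdd : BddAbove ((fun x => |(F x - G x) / x|) '' Set.Ici (2:ℝ)) := by
    refine ⟨(1/4 + |deriv F 0|) + (1/4 + |deriv G 0|), ?_⟩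
    rintro y ⟨x, hx, rfl⟩
    have h1 := memF_div_bound hF x hx
    have h2 := memF_div_bound hG x hx
    calc |(F x - G x) / x| = |F x / x - G x / x| := by rw [sub_div]
      _ ≤ |F x / x| + |G x / x| := abs_sub _ _
      _ ≤ (1/4 + |deriv F 0|) + (1/4 + |deriv G 0|) := by linarith
  have hmem : |(F x₁ - G x₁) / x₁| ∈ (fun x => |(F x - G x) / x|) '' Set.Ici (2:ℝ) :=
    ⟨x₁, le_of_lt hx₁2, rfl⟩
  have hle : |(F x₁ - G x₁) / x₁| ≤ Fnorm (fun x => F x - G x) := by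
    have h1 : (0:ℝ) ≤ sSup ((fun x => |F x - G x|) '' Set.Ico (0:ℝ) 2) := by
      apply Real.sSup_nonneg
      rintro y ⟨x, _, rfl⟩
      exact abs_nonneg _
    have h2 : |(F x₁ - G x₁) / x₁| ≤
        sSup ((fun x => |(F x - G x) / x|) '' Set.Ici (2:ℝ)) := le_csSup hbdd hmem
    unfold Fnorm
    simp only []
    linarith
  have hkey : |(F x₁ - G x₁) / x₁| < (F x₁ - 1/x₁)/x₁ := lt_of_le_of_lt hle hnorm
  have hGx₁ : G x₁ > 1/x₁ := by
    have h1 : (F x₁ - G x₁) / x₁ < (F x₁ - 1/x₁)/x₁ := lt_of_le_of_lt (le_abs_self _) hkey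
    have h2 : F x₁ - G x₁ < F x₁ - 1/x₁ := by
      exact (div_lt_div_iff_of_pos_right hx₁pos).mp h1
    linarith
  -- now find a crossing point for G
  have hG1 : G 1 - 1/(1:ℝ) < 0 := by
    have := memF_upper hG 1 (by norm_num)
    norm_num
    linarith
  have hcont : ContinuousOn (fun x => G x - 1/x) (Icc 1 x₁) := by
    apply ContinuousOn.sub hG.1.continuous.continuousOn
    apply ContinuousOn.div continuousOn_const continuousOn_id
    intro x hx
    have : (1:ℝ) ≤ x := hx.1
    intro h
    simp only [id] at h
    linarith
  have h1le : (1:ℝ) ≤ x₁ := by linarith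
  have hivt := intermediate_value_Icc h1le hcont
  have h0mem : (0:ℝ) ∈ Icc ((fun x => G x - 1/x) 1) ((fun x => G x - 1/x) x₁) := by
    constructor
    · simp only []
      linarith
    · simp only []
      linarith
  obtain ⟨c, hc, hceq⟩ := hivt h0mem
  have hGc : G c = 1/c := by
    have : G c - 1/c = 0 := hceq
    linarith
  have hcpos : (0:ℝ) < c := lt_of_lt_of_le one_pos hc.1
  have hclt : c < x₁ := by
    rcases lt_or_eq_of_le hc.2 with h | h
    · exact h
    · exfalso
      rw [h] at hGc
      linarith
  exact ⟨c, hcpos, x₁, hclt, hGc, hGx₁⟩
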